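/- Every mean-type mapping 𝐌 : I^p → I^p admits at least one 𝐌-invariant mean on I. -/

import Mathlib

open Filter Set Topology

/-- `M` is a mean on the interval `I` (for `p`-tuples): its value is between the
minimum and the maximum of the arguments, for every tuple with entries in `I`. -/
def IsMean (I : Set ℝ) (p : ℕ) (M : (Fin p → ℝ) → ℝ) : Prop :=
  ∀ v : Fin p → ℝ, (∀ i, v i ∈ I) →
    sInf (Set.range v) ≤ M v ∧ M v ≤ sSup (Set.range v)

/-- A mean-type mapping: every coordinate function is a mean on `I`, and it maps
`I^p` into `I^p`. -/
def IsMeanType (I : Set ℝ) (p : ℕ) (T : (Fin p → ℝ) → Fin p → ℝ) : Prop :=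
  (∀ i, IsMean I p fun v => T v i) ∧
    ∀ v : Fin p → ℝ, (∀ i, v i ∈ I) → ∀ i, T v i ∈ I

/-- The unfolded orbit `O*_𝐌(v)`: the `(n*p + i)`-th term (`0 ≤ i < p`) is the
`i`-th coordinate of `𝐌ⁿ(v)`. -/
def orbitSeq (p : ℕ) (hp : 0 < p) (T : (Fin p → ℝ) → Fin p → ℝ)
    (v : Fin p → ℝ) : ℕ → ℝ :=
  fun k => (T^[k / p] v) ⟨k % p, Nat.mod_lt k hp⟩

/-- Every mean-type mapping admits at least one invariant mean. -/
theorem exists_invariant_mean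
    {I : Set ℝ} (hne : I.Nonempty) (hI : I.OrdConnected)
    {p : ℕ} (hp : 2 ≤ p)
    (T : (Fin p → ℝ) → Fin p → ℝ) (hT : IsMeanType I p T) :
    ∃ K : (Fin p → ℝ) → ℝ, IsMean I p K ∧
      ∀ v : Fin p → ℝ, (∀ i, v i ∈ I) → K (T v) = K v := by
  have hp0 : 0 < p := lt_of_lt_of_le two_pos hp
  haveI : Nonempty (Fin p) := ⟨⟨0, hp0⟩⟩
  -- basic facts about finite ranges
  have hrne : ∀ w : Fin p → ℝ, (Set.range w).Nonempty := fun w => Set.range_nonempty w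
  have hbddA : ∀ w : Fin p → ℝ, BddAbove (Set.range w) :=
    fun w => (Set.finite_range w).bddAbove
  have hbddB : ∀ w : Fin p → ℝ, BddBelow (Set.range w) :=
    fun w => (Set.finite_range w).bddBelow
  -- iterates stay in I^p
  have hiter : ∀ (v : Fin p → ℝ), (∀ i, v i ∈ I) → ∀ n, ∀ i, (T^[n] v) i ∈ I := by
    intro v hv n
    induction n with
    | zero => simpa using hv
    | succ n ih =>
      intro i
      rw [Function.iterate_succ_apply']
      exact hT.2 _ ih i
  -- max decreases under T, min increases
  have hmax : ∀ (w : Fin p → ℝ), (∀ i, w i ∈ I) →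
      sSup (Set.range (T w)) ≤ sSup (Set.range w) := by
    intro w hw
    refine csSup_le (hrne _) ?_
    rintro _ ⟨i, rfl⟩
    exact (hT.1 i w hw).2
  have hmin : ∀ (w : Fin p → ℝ), (∀ i, w i ∈ I) →
      sInf (Set.range w) ≤ sInf (Set.range (T w)) := by
    intro w hw
    refine le_csInf (hrne _) ?_
    rintro _ ⟨i, rfl⟩
    exact (hT.1 i w hw).1
  -- min of iterates bounded below by min of v
  have hminiter : ∀ (v : Fin p → ℝ), (∀ i, v i ∈ I) → ∀ n,
      sInf (Set.range v) ≤ sInf (Set.range (T^[n] v)) := by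
    intro v hv n
    induction n with
    | zero => simp
    | succ n ih =>
      rw [Function.iterate_succ_apply']
      exact ih.trans (hmin _ (hiter v hv n))
  have hlow : ∀ (v : Fin p → ℝ), (∀ i, v i ∈ I) → ∀ n,
      sInf (Set.range v) ≤ sSup (Set.range (T^[n] v)) :=
    fun v hv n => (hminiter v hv n).trans (csInf_le_csSup (hrne _) (hbddB _) (hbddA _))
  refine ⟨fun v => ⨅ n : ℕ, sSup (Set.range (T^[n] v)), ?_, ?_⟩
  · -- K is a mean
    intro v hv
    have hbdd : BddBelow (Set.range fun n : ℕ => sSup (Set.range (T^[n] v))) := by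
      refine ⟨sInf (Set.range v), ?_⟩
      rintro _ ⟨n, rfl⟩
      exact hlow v hv n
    constructor
    · exact le_ciInf fun n => hlow v hv n
    · have := ciInf_le hbdd 0
      simpa using this
  · -- invariance
    intro v hv
    have hbdd : BddBelow (Set.range fun n : ℕ => sSup (Set.range (T^[n] v))) := by
      refine ⟨sInf (Set.range v), ?_⟩
      rintro _ ⟨n, rfl⟩
      exact hlow v hv n
    have hbdd' : BddBelow (Set.range fun n : ℕ => sSup (Set.range (T^[n] (T v)))) := by
      refine ⟨sInf (Set.range v), ?_⟩
      rintro _ ⟨n, rfl⟩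
      show sInf (Set.range v) ≤ sSup (Set.range (T^[n] (T v)))
      rw [← Function.iterate_succ_apply]
      exact hlow v hv (n + 1)
    have hshift : ∀ n : ℕ, sSup (Set.range (T^[n] (T v))) = sSup (Set.range (T^[n+1] v)) := by
      intro n
      rw [Function.iterate_succ_apply]
    apply le_antisymm
    · refine le_ciInf fun n => ?_
      calc ⨅ m : ℕ, sSup (Set.range (T^[m] (T v)))
          ≤ sSup (Set.range (T^[n] (T v))) := ciInf_le hbdd' n
        _ = sSup (Set.range (T^[n+1] v)) := hshift n
        _ ≤ sSup (Set.range (T^[n] v)) := by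
            rw [Function.iterate_succ_apply']
            exact hmax _ (hiter v hv n)
    · refine le_ciInf fun n => ?_
      calc ⨅ m : ℕ, sSup (Set.range (T^[m] v))
          ≤ sSup (Set.range (T^[n+1] v)) := ciInf_le hbdd (n + 1)
        _ = sSup (Set.range (T^[n] (T v))) := (hshift n).symm
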